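/- Suppose (u^{n−1}, φ^{n−1}) and (u^n, φ^n) both satisfy the discrete Poisson equation; that u^{n−1}_i(K) ≥ 0 for 1 ≤ i ≤ I and Σ_{i=1}^I u^{n−1}_i(K) ≤ 1 for all K; that u^n_i(K) > 0 for all 1 ≤ i ≤ I and u^n_0(K) := 1 − Σ_{i=1}^I u^n_i(K) > 0 for all K; and that for every 1 ≤ i ≤ I and K ∈ 𝒯 the conservation law m_K·(u^n_i(K) − u^{n−1}_i(K)) + τ·Σ_{L} F^n_i(K,L) = 0 holds, where F^n_i is the discrete flux associated with u^n and φ^n. Define the electrochemical potentials μ_i(K) = log(u^n_i(K)/u^n_0(K)) + z_i·φ^n(K) and the dissipation 𝒟 = (1/2)·Σ_{i=1}^I Σ_{K,L} F^n_i(K,L)·(μ_i(K) − μ_i(L)). Then 𝒟 ≥ 0 and ℋ(u^n, φ^n) + τ·𝒟 ≤ ℋ(u^{n−1}, φ^{n−1}). -/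
import Mathlib


/-- The Bernoulli function: `𝔅(y) = y / (exp y - 1)` for `y ≠ 0`, and `𝔅(0) = 1`. -/
noncomputable def Bern (y : ℝ) : ℝ := if y = 0 then 1 else y / (Real.exp y - 1)

/-- The mixing entropy `H(U) = u₀·log u₀ + Σᵢ uᵢ·log uᵢ` with `u₀ = 1 − Σᵢ uᵢ`
(the convention `0·log 0 = 0` holds since `Real.log 0 = 0` in Mathlib). -/
noncomputable def mixEntropy (I : ℕ) (U : Fin I → ℝ) : ℝ :=
  (1 - ∑ i, U i) * Real.log (1 - ∑ i, U i) + ∑ i, U i * Real.log (U i)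

lemma Bern_pos (y : ℝ) : 0 < Bern y := by
  unfold Bern
  rcases lt_trichotomy y 0 with h | h | h
  · rw [if_neg h.ne]
    apply div_pos_of_neg_of_neg h
    have : Real.exp y < 1 := Real.exp_lt_one_iff.mpr h
    linarith
  · simp [h]
  · rw [if_neg h.ne']
    apply div_pos h
    have : 1 < Real.exp y := Real.one_lt_exp_iff.mpr h
    linarith

lemma exp_ne_one' {y : ℝ} (h : y ≠ 0) : Real.exp y ≠ 1 := by
  intro hc
  exact h (Real.exp_eq_exp.mp (by rw [hc, Real.exp_zero]))

lemma Bern_neg (y : ℝ) : Bern (-y) = Real.exp y * Bern y := by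
  rcases eq_or_ne y 0 with h | h
  · simp [h, Bern]
  · have hne : -y ≠ 0 := neg_ne_zero.mpr h
    have h1 : Real.exp y ≠ 0 := Real.exp_ne_zero y
    have h2 : Real.exp y - 1 ≠ 0 := sub_ne_zero.mpr (exp_ne_one' h)
    have h3 : Real.exp (-y) - 1 ≠ 0 := sub_ne_zero.mpr (exp_ne_one' hne)
    have h4 : (1:ℝ) - Real.exp y ≠ 0 := sub_ne_zero.mpr (Ne.symm (exp_ne_one' h))
    rw [Bern, Bern, if_neg hne, if_neg h, Real.exp_neg]
    field_simp
    ring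

lemma mul_log_le {x y : ℝ} (hx : 0 < x) (hy : 0 ≤ y) :
    x * Real.log x - y * Real.log y ≤ (1 + Real.log x) * (x - y) := by
  rcases eq_or_lt_of_le hy with h | h
  · rw [← h]; simp; nlinarith [hx]
  · have h1 : Real.log (x / y) ≤ x / y - 1 := Real.log_le_sub_one_of_pos (div_pos hx h)
    have h2 : Real.log (x / y) = Real.log x - Real.log y := Real.log_div hx.ne' h.ne'
    have h3 : y * Real.log (x / y) ≤ y * (x / y - 1) :=
      mul_le_mul_of_nonneg_left h1 h.le
    have h4 : y * (x / y - 1) = x - y := by field_simp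
    nlinarith [h3]

lemma sum_mul_antisym {T : Type*} [Fintype T] (G : T → T → ℝ)
    (hG : ∀ K L, G K L = - G L K) (q : T → ℝ) :
    ∑ K, ∑ L, q K * G K L = 1/2 * ∑ K, ∑ L, G K L * (q K - q L) := by
  have h1 : ∑ K, ∑ L, q L * G K L = - ∑ K, ∑ L, q K * G K L := by
    rw [Finset.sum_comm, ← Finset.sum_neg_distrib]
    apply Finset.sum_congr rfl; intro L _
    rw [← Finset.sum_neg_distrib]
    apply Finset.sum_congr rfl; intro K _
    rw [hG K L]; ring
  have h2 : ∑ K, ∑ L, G K L * (q K - q L)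
      = ∑ K, ∑ L, q K * G K L - ∑ K, ∑ L, q L * G K L := by
    rw [← Finset.sum_sub_distrib]
    apply Finset.sum_congr rfl; intro K _
    rw [← Finset.sum_sub_distrib]
    apply Finset.sum_congr rfl; intro L _
    ring
  rw [h2, h1]; ring

lemma mixEntropy_diff_le (I : ℕ) (x y : Fin I → ℝ)
    (hx : ∀ i, 0 < x i) (hx0 : 0 < 1 - ∑ i, x i)
    (hy : ∀ i, 0 ≤ y i) (hy0 : ∑ i, y i ≤ 1) :
    mixEntropy I x - mixEntropy I y ≤
      ∑ i, (Real.log (x i) - Real.log (1 - ∑ j, x j)) * (x i - y i) := by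
  set X0 := 1 - ∑ i, x i with hX0
  set Y0 := 1 - ∑ i, y i with hY0
  have h0 : X0 * Real.log X0 - Y0 * Real.log Y0 ≤ (1 + Real.log X0) * (X0 - Y0) :=
    mul_log_le hx0 (by rw [hY0]; linarith)
  have hsum : ∑ i, (x i * Real.log (x i) - y i * Real.log (y i))
      ≤ ∑ i, (1 + Real.log (x i)) * (x i - y i) :=
    Finset.sum_le_sum (fun i _ => mul_log_le (hx i) (hy i))
  have e1 : X0 - Y0 = -∑ i, (x i - y i) := by
    rw [hX0, hY0, Finset.sum_sub_distrib]; ring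
  have e2 : ∑ i, (1 + Real.log (x i)) * (x i - y i)
      = ∑ i, (Real.log (x i) - Real.log X0) * (x i - y i)
        + (1 + Real.log X0) * ∑ i, (x i - y i) := by
    rw [Finset.mul_sum, ← Finset.sum_add_distrib]
    apply Finset.sum_congr rfl; intro i _; ring
  have e3 : mixEntropy I x - mixEntropy I y
      = (X0 * Real.log X0 - Y0 * Real.log Y0)
        + ∑ i, (x i * Real.log (x i) - y i * Real.log (y i)) := by
    unfold mixEntropy
    rw [Finset.sum_sub_distrib, ← hX0, ← hY0]; ring
  rw [e3]
  rw [e1, mul_neg] at h0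
  linarith [h0, hsum, e2]

/-- Free energy dissipation of the scheme: the discrete dissipation `𝒟` is
nonnegative and the discrete free energy decays, `ℋ(uⁿ,φⁿ) + τ·𝒟 ≤ ℋ(uⁿ⁻¹,φⁿ⁻¹)`. -/
theorem discrete_free_energy_decay
    (T : Type*) [Fintype T] [Nonempty T]
    (m : T → ℝ) (hm : ∀ K, 0 < m K)
    (a : T → T → ℝ) (hsym : ∀ K L, a K L = a L K)
    (hnn : ∀ K L, 0 ≤ a K L) (hdiag : ∀ K, a K K = 0)
    (I : ℕ) (hI : 1 ≤ I) (D z : Fin I → ℝ) (hD : ∀ i, 0 < D i)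
    (τ : ℝ) (hτ : 0 < τ)
    (lam : ℝ) (hlam : 0 < lam)
    (b : T → ℝ) (hb : ∀ K, 0 ≤ b K) (g : T → ℝ) (f : T → ℝ)
    -- the discrete free energy functional
    (En : (Fin I → T → ℝ) → (T → ℝ) → ℝ)
    (hEn : ∀ u φ, En u φ =
      (∑ K, m K * mixEntropy I (fun i => u i K)) +
      lam ^ 2 / 4 * ∑ K, ∑ L, a K L * (φ K - φ L) ^ 2 +
      lam ^ 2 / 2 * ∑ K, b K * (φ K - g K) ^ 2 -
      lam ^ 2 * ∑ K, b K * g K * (g K - φ K))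
    -- data at the two time levels
    (up un : Fin I → T → ℝ) (φp φn : T → ℝ)
    -- both pairs satisfy the discrete Poisson equation
    (hPoisson_p : ∀ K, lam ^ 2 * ((∑ L, a K L * (φp K - φp L)) + b K * (φp K - g K)) =
      m K * (f K + ∑ i, z i * up i K))
    (hPoisson_n : ∀ K, lam ^ 2 * ((∑ L, a K L * (φn K - φn L)) + b K * (φn K - g K)) =
      m K * (f K + ∑ i, z i * un i K))
    -- admissibility of the previous iterate, positivity of the new one
    (hup_nn : ∀ i K, 0 ≤ up i K) (hup_sum : ∀ K, ∑ i, up i K ≤ 1)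
    (hun_pos : ∀ i K, 0 < un i K) (hun0_pos : ∀ K, 0 < 1 - ∑ i, un i K)
    -- discrete fluxes associated with (uⁿ, φⁿ) and the conservation law
    (F : Fin I → T → T → ℝ)
    (hF : ∀ i K L, F i K L = a K L * D i *
      (un i K * (1 - ∑ j, un j L) * Bern (z i * (φn L - φn K)) -
        un i L * (1 - ∑ j, un j K) * Bern (z i * (φn K - φn L))))
    (hcons : ∀ i K, m K * (un i K - up i K) + τ * ∑ L, F i K L = 0)
    -- electrochemical potentials and dissipation
    (μ : Fin I → T → ℝ)
    (hμ : ∀ i K, μ i K = Real.log (un i K / (1 - ∑ j, un j K)) + z i * φn K)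
    (Diss : ℝ)
    (hDiss : Diss = 1 / 2 * ∑ i, ∑ K, ∑ L, F i K L * (μ i K - μ i L)) :
    0 ≤ Diss ∧ En un φn + τ * Diss ≤ En up φp := by
  -- Step A: per-edge dissipation nonnegativity
  have hFμ : ∀ i K L, 0 ≤ F i K L * (μ i K - μ i L) := by
    intro i K L
    rcases eq_or_lt_of_le (hnn K L) with ha | ha
    · rw [hF, ← ha]; simp
    · have hKpos := hun_pos i K
      have hLpos := hun_pos i L
      have h0K := hun0_pos K
      have h0L := hun0_pos L
      set y := z i * (φn K - φn L) with hydef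
      have hyL : z i * (φn L - φn K) = -y := by rw [hydef]; ring
      have hBpos := Bern_pos y
      set c := un i K * (1 - ∑ j, un j L) * Real.exp y / (un i L * (1 - ∑ j, un j K)) with hcdef
      have hc : 0 < c := by
        apply div_pos <;> positivity
      have hne : un i L * (1 - ∑ j, un j K) ≠ 0 := by positivity
      have hFe : F i K L = a K L * D i * Bern y * (un i L * (1 - ∑ j, un j K)) * (c - 1) := by
        rw [hF, hyL, Bern_neg, hcdef]
        field_simp
        ring
      have hlogc : Real.log c = Real.log (un i K) + Real.log (1 - ∑ j, un j L) + y
          - Real.log (un i L) - Real.log (1 - ∑ j, un j K) := by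
        rw [hcdef, Real.log_div (by positivity) (by positivity),
            Real.log_mul (by positivity) (Real.exp_ne_zero y),
            Real.log_mul hKpos.ne' h0L.ne', Real.log_mul hLpos.ne' h0K.ne',
            Real.log_exp]
        ring
      have hμe : μ i K - μ i L = Real.log c := by
        rw [hμ, hμ, hlogc, Real.log_div hKpos.ne' h0K.ne',
            Real.log_div hLpos.ne' h0L.ne', hydef]
        ring
      have h1 : 0 ≤ (c - 1) * Real.log c := by
        rcases le_or_gt 1 c with h | h
        · exact mul_nonneg (by linarith) (Real.log_nonneg h)
        · exact mul_nonneg_of_nonpos_of_nonpos (by linarith) (Real.log_nonpos hc.le h.le)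
      have h2 : 0 ≤ a K L * D i * Bern y * (un i L * (1 - ∑ j, un j K)) :=
        mul_nonneg (mul_nonneg (mul_nonneg ha.le (hD i).le) hBpos.le) (by positivity)
      calc (0:ℝ) ≤ (a K L * D i * Bern y * (un i L * (1 - ∑ j, un j K))) * ((c - 1) * Real.log c) :=
            mul_nonneg h2 h1
        _ = F i K L * (μ i K - μ i L) := by rw [hFe, hμe]; ring
  -- Step B: Diss nonnegative
  have hDiss0 : 0 ≤ Diss := by
    rw [hDiss]
    apply mul_nonneg (by norm_num)
    apply Finset.sum_nonneg; intro i _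
    apply Finset.sum_nonneg; intro K _
    apply Finset.sum_nonneg; intro L _
    exact hFμ i K L
  -- Step C: rewrite the "entropy production" sum via the conservation law
  have key_i : ∀ i, ∑ K, μ i K * (m K * (un i K - up i K))
      = -(τ * (1/2 * ∑ K, ∑ L, F i K L * (μ i K - μ i L))) := by
    intro i
    have hanti : ∀ K L, F i K L = - F i L K := by
      intro K L; rw [hF, hF, hsym K L]; ring
    have hs : ∑ K, ∑ L, μ i K * F i K L
        = 1/2 * ∑ K, ∑ L, F i K L * (μ i K - μ i L) :=
      sum_mul_antisym (F i) hanti (μ i)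
    have step1 : ∑ K, μ i K * (m K * (un i K - up i K))
        = -(τ * ∑ K, ∑ L, μ i K * F i K L) := by
      rw [Finset.mul_sum, ← Finset.sum_neg_distrib]
      apply Finset.sum_congr rfl; intro K _
      have hin : ∑ L, μ i K * F i K L = μ i K * ∑ L, F i K L := by
        rw [Finset.mul_sum]
      rw [hin]
      linear_combination μ i K * (hcons i K)
    rw [step1, hs]
  have hS1 : ∑ i, ∑ K, μ i K * (m K * (un i K - up i K)) = -(τ * Diss) := by
    rw [hDiss]
    calc ∑ i, ∑ K, μ i K * (m K * (un i K - up i K))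
        = ∑ i, -(τ * (1/2 * ∑ K, ∑ L, F i K L * (μ i K - μ i L))) :=
          Finset.sum_congr rfl (fun i _ => key_i i)
      _ = -(τ * (1 / 2 * ∑ i, ∑ K, ∑ L, F i K L * (μ i K - μ i L))) := by
          rw [Finset.mul_sum, Finset.mul_sum, ← Finset.sum_neg_distrib]
  -- Step D: entropy inequality
  have hENT : (∑ K, m K * mixEntropy I (fun i => un i K))
      - (∑ K, m K * mixEntropy I (fun i => up i K))
      ≤ ∑ K, m K * ∑ i, (Real.log (un i K) - Real.log (1 - ∑ j, un j K)) * (un i K - up i K) := by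
    rw [← Finset.sum_sub_distrib]
    apply Finset.sum_le_sum; intro K _
    rw [← mul_sub]
    apply mul_le_mul_of_nonneg_left _ (hm K).le
    exact mixEntropy_diff_le I (fun i => un i K) (fun i => up i K)
      (fun i => hun_pos i K) (hun0_pos K) (fun i => hup_nn i K) (hup_sum K)
  -- Step E: electrostatic part
  have hdiff : ∀ K, lam^2 * ((∑ L, a K L * ((φn K - φp K) - (φn L - φp L)))
      + b K * (φn K - φp K)) = m K * ∑ i, z i * (un i K - up i K) := by
    intro K
    have e1 : ∑ L, a K L * ((φn K - φp K) - (φn L - φp L))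
        = (∑ L, a K L * (φn K - φn L)) - ∑ L, a K L * (φp K - φp L) := by
      rw [← Finset.sum_sub_distrib]
      apply Finset.sum_congr rfl; intros; ring
    have e2 : ∑ i, z i * (un i K - up i K)
        = (∑ i, z i * un i K) - ∑ i, z i * up i K := by
      rw [← Finset.sum_sub_distrib]
      apply Finset.sum_congr rfl; intros; ring
    rw [e1, e2]
    linear_combination (hPoisson_n K) - (hPoisson_p K)
  have hsymmG : ∑ K, ∑ L, φn K * (a K L * ((φn K - φp K) - (φn L - φp L)))
      = 1/2 * ∑ K, ∑ L, a K L * ((φn K - φp K) - (φn L - φp L)) * (φn K - φn L) :=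
    sum_mul_antisym (fun K L => a K L * ((φn K - φp K) - (φn L - φp L)))
      (fun K L => by
        show a K L * ((φn K - φp K) - (φn L - φp L))
          = -(a L K * ((φn L - φp L) - (φn K - φp K)))
        rw [hsym K L]; ring) φn
  have hTEST : ∑ K, φn K * (m K * ∑ i, z i * (un i K - up i K))
      = lam^2 * (1/2 * ∑ K, ∑ L, a K L * ((φn K - φp K) - (φn L - φp L)) * (φn K - φn L))
        + lam^2 * ∑ K, b K * (φn K - φp K) * φn K := by
    have e : ∀ K, φn K * (m K * ∑ i, z i * (un i K - up i K))
        = lam^2 * (∑ L, φn K * (a K L * ((φn K - φp K) - (φn L - φp L))))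
          + lam^2 * (b K * (φn K - φp K) * φn K) := by
      intro K
      have hin : ∑ L, φn K * (a K L * ((φn K - φp K) - (φn L - φp L)))
          = φn K * ∑ L, a K L * ((φn K - φp K) - (φn L - φp L)) := by
        rw [Finset.mul_sum]
      rw [hin]
      linear_combination (-(φn K)) * (hdiff K)
    calc ∑ K, φn K * (m K * ∑ i, z i * (un i K - up i K))
        = ∑ K, (lam^2 * (∑ L, φn K * (a K L * ((φn K - φp K) - (φn L - φp L))))
            + lam^2 * (b K * (φn K - φp K) * φn K)) :=
          Finset.sum_congr rfl (fun K _ => e K)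
      _ = lam^2 * (∑ K, ∑ L, φn K * (a K L * ((φn K - φp K) - (φn L - φp L))))
            + lam^2 * ∑ K, b K * (φn K - φp K) * φn K := by
          rw [Finset.sum_add_distrib, ← Finset.mul_sum, ← Finset.mul_sum]
      _ = _ := by rw [hsymmG]
  have edge : lam^2/4 * (∑ K, ∑ L, a K L * (φn K - φn L)^2)
      - lam^2/4 * (∑ K, ∑ L, a K L * (φp K - φp L)^2)
      ≤ lam^2 * (1/2 * ∑ K, ∑ L, a K L * ((φn K - φp K) - (φn L - φp L)) * (φn K - φn L)) := by
    simp only [Finset.mul_sum]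
    rw [← Finset.sum_sub_distrib]
    apply Finset.sum_le_sum; intro K _
    rw [← Finset.sum_sub_distrib]
    apply Finset.sum_le_sum; intro L _
    nlinarith [mul_nonneg (mul_nonneg (sq_nonneg lam) (hnn K L))
      (sq_nonneg ((φn K - φp K) - (φn L - φp L)))]
  have node : lam^2/2 * (∑ K, b K * (φn K - g K)^2) - lam^2 * (∑ K, b K * g K * (g K - φn K))
      - (lam^2/2 * (∑ K, b K * (φp K - g K)^2) - lam^2 * (∑ K, b K * g K * (g K - φp K)))
      ≤ lam^2 * ∑ K, b K * (φn K - φp K) * φn K := by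
    simp only [Finset.mul_sum]
    rw [← Finset.sum_sub_distrib, ← Finset.sum_sub_distrib, ← Finset.sum_sub_distrib]
    apply Finset.sum_le_sum; intro K _
    nlinarith [mul_nonneg (mul_nonneg (sq_nonneg lam) (hb K)) (sq_nonneg (φn K - φp K))]
  -- assemble: SL + TEST = S1
  have hSL : (∑ K, m K * ∑ i, (Real.log (un i K) - Real.log (1 - ∑ j, un j K)) * (un i K - up i K))
      + ∑ K, φn K * (m K * ∑ i, z i * (un i K - up i K))
      = ∑ i, ∑ K, μ i K * (m K * (un i K - up i K)) := by
    rw [Finset.sum_comm]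
    rw [← Finset.sum_add_distrib]
    apply Finset.sum_congr rfl; intro K _
    simp only [Finset.mul_sum]
    rw [← Finset.sum_add_distrib]
    apply Finset.sum_congr rfl; intro i _
    rw [hμ, Real.log_div (hun_pos i K).ne' (hun0_pos K).ne']
    ring
  refine ⟨hDiss0, ?_⟩
  rw [hEn un φn, hEn up φp]
  have hchain : ((∑ K, m K * mixEntropy I (fun i => un i K))
      - (∑ K, m K * mixEntropy I (fun i => up i K)))
      + ((lam^2/4 * (∑ K, ∑ L, a K L * (φn K - φn L)^2)
          + lam^2/2 * (∑ K, b K * (φn K - g K)^2)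
          - lam^2 * (∑ K, b K * g K * (g K - φn K)))
        - (lam^2/4 * (∑ K, ∑ L, a K L * (φp K - φp L)^2)
          + lam^2/2 * (∑ K, b K * (φp K - g K)^2)
          - lam^2 * (∑ K, b K * g K * (g K - φp K))))
      ≤ -(τ * Diss) := by
    linarith [hENT, edge, node, hSL, hS1, hTEST]
  linarith [hchain]
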